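/- For every α > 0 there exists a constant C > 0 such that for all R > 0 and all ε > 0, there is a finite set S of square-summable sequences with cardinality at most exp( C (R/ε)^{2/(1+2α)} ) such that every element of the set B = { (h_k + g_k)_{k≥1} : Σ_k h_k² k^{1+2α} ≤ R², Σ_k g_k² ≤ ε² } is within ℓ²-distance 2ε of some element of S. Equivalently, log N(2ε, B, ‖·‖₂) ≤ C (R/ε)^{2/(1+2α)}. -/

import Mathlib

open Set Metric MeasureTheory
open scoped ENNReal NNReal

private lemma coord_ineq {a b r d : ℝ} (hr : 0 < r) (hd : 0 < d) :
    (a + b)^2 / (2*(r+d)^2) ≤ 1/2*(a^2/r^2) + 1/2*(b^2/d^2) := by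
  have key : (a+b)^2 * (r^2*d^2) ≤ ((r+d)^2) * (a^2*d^2 + b^2*r^2) := by
    nlinarith [mul_nonneg (mul_nonneg hr.le hd.le) (sq_nonneg (a*d - b*r)),
      sq_nonneg (a*d*d), sq_nonneg (b*r*r), mul_pos hr hd]
  have h2 : (a+b)^2/(2*(r+d)^2) ≤ (a^2*d^2 + b^2*r^2)/(2*(r^2*d^2)) := by
    rw [div_le_div_iff₀ (by positivity) (by positivity)]
    nlinarith [key]
  refine h2.trans (le_of_eq ?_)
  field_simp

private lemma sqrt2_le_two : Real.sqrt 2 ≤ 2 := by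
  nlinarith [Real.sq_sqrt (by norm_num : (0:ℝ) ≤ 2), Real.sqrt_nonneg 2]

private lemma sep_card_bound (n : ℕ) {δ : ℝ} (hδ : 0 < δ) (r : Fin n → ℝ) (hr : ∀ i, 0 < r i)
    (P : Finset (EuclideanSpace ℝ (Fin n)))
    (hPE : ∀ p ∈ P, ∑ i, (p i)^2 / (r i)^2 ≤ 1)
    (hsep : (P : Set (EuclideanSpace ℝ (Fin n))).Pairwise fun p q => δ < dist p q) :
    (P.card : ℝ) ≤ ∏ i, (2 * (2 * r i / δ + 1)) := by
  classical
  set d : ℝ := δ/2 with hd_def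
  have hd : 0 < d := by positivity
  set s : Fin n → ℝ := fun i => Real.sqrt 2 * (r i + d) with hs_def
  have hs : ∀ i, 0 < s i := fun i => by
    have := hr i
    have h2 : 0 < Real.sqrt 2 := Real.sqrt_pos.mpr (by norm_num)
    positivity
  set f := Matrix.toEuclideanLin (𝕜 := ℝ) (Matrix.diagonal s) with hf_def
  set T := f '' (closedBall (0 : EuclideanSpace ℝ (Fin n)) 1) with hT_def
  -- each ball is inside T
  have hball : ∀ p ∈ P, ball p d ⊆ T := by
    intro p hp z hz
    refine ⟨WithLp.toLp 2 (fun i => z i / s i), ?_, ?_⟩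
    · rw [mem_closedBall, dist_zero_right, EuclideanSpace.norm_eq]
      refine Real.sqrt_le_one.mpr ?_
      have hzi : ∀ i, ‖z i / s i‖^2 ≤ 1/2*((p i)^2/(r i)^2) + 1/2*((z i - p i)^2/d^2) := by
        intro i
        rw [Real.norm_eq_abs, sq_abs, div_pow]
        have hsq : (s i)^2 = 2*(r i + d)^2 := by
          rw [hs_def, mul_pow, Real.sq_sqrt (by norm_num : (0:ℝ) ≤ 2)]
        rw [hsq]
        have := coord_ineq (a := p i) (b := z i - p i) (hr i) hd
        simpa using this
      calc ∑ i, ‖z i / s i‖^2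
          ≤ ∑ i, (1/2*((p i)^2/(r i)^2) + 1/2*((z i - p i)^2/d^2)) :=
            Finset.sum_le_sum fun i _ => hzi i
        _ = 1/2*(∑ i, (p i)^2/(r i)^2) + 1/2*((∑ i, (z i - p i)^2)/d^2) := by
            rw [Finset.sum_add_distrib, ← Finset.mul_sum, ← Finset.mul_sum, Finset.sum_div,
              Finset.mul_sum]
        _ ≤ 1/2*1 + 1/2*1 := by
            have h1 : ∑ i, (p i)^2/(r i)^2 ≤ 1 := hPE p hp
            have h2 : (∑ i, (z i - p i)^2)/d^2 ≤ 1 := by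
              rw [div_le_one (by positivity)]
              have : dist z p ≤ d := (mem_ball.mp hz).le
              have hdist : dist z p = Real.sqrt (∑ i, (z i - p i)^2) := by
                rw [EuclideanSpace.dist_eq]
                congr 1
                exact Finset.sum_congr rfl fun i _ => by rw [Real.dist_eq, sq_abs]
              have hnn : 0 ≤ ∑ i, (z i - p i)^2 := Finset.sum_nonneg fun i _ => sq_nonneg _
              calc ∑ i, (z i - p i)^2 = (dist z p)^2 := by rw [hdist, Real.sq_sqrt hnn]
                _ ≤ d^2 := by nlinarith [dist_nonneg (x := z) (y := p)]
            nlinarith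
        _ = 1 := by norm_num
    · show f _ = z
      have : ∀ i, f (WithLp.toLp 2 (fun i => z i / s i)) i = z i := by
        intro i
        rw [hf_def, Matrix.toEuclideanLin_apply]
        show Matrix.mulVec (Matrix.diagonal s) (fun i => z i / s i) i = z i
        rw [Matrix.mulVec_diagonal]
        rw [mul_comm, div_mul_cancel₀ _ (hs i).ne']
      refine congrArg (WithLp.toLp 2) (funext fun i => ?_)
      exact this i
  -- disjointness
  have hdisj : (P : Set (EuclideanSpace ℝ (Fin n))).PairwiseDisjoint (fun p => ball p d) := by
    intro p hp q hq hpq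
    apply ball_disjoint_ball
    have := hsep hp hq hpq
    rw [hd_def]
    linarith
  -- volume computation
  set B := volume (ball (0 : EuclideanSpace ℝ (Fin n)) 1) with hB_def
  have hB0 : B ≠ 0 := (measure_ball_pos volume _ one_pos).ne'
  have hBtop : B ≠ ⊤ := measure_ball_lt_top.ne
  have hdet : LinearMap.det f = ∏ i, s i := by
    have h : Matrix.toEuclideanLin (𝕜 := ℝ) (Matrix.diagonal s)
        = (WithLp.linearEquiv 2 ℝ (Fin n → ℝ)).symm.conj (Matrix.toLin' (Matrix.diagonal s)) := rfl
    rw [hf_def, h, LinearEquiv.conj_apply, LinearMap.comp_assoc,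
      LinearMap.det_conj (Matrix.toLin' (Matrix.diagonal s)) (WithLp.linearEquiv 2 ℝ (Fin n → ℝ)).symm,
      LinearMap.det_toLin', Matrix.det_diagonal]
  have hvolT : volume T = ENNReal.ofReal (∏ i, s i) * B := by
    rw [hT_def, Measure.addHaar_image_linearMap, hdet,
      abs_of_pos (Finset.prod_pos fun i _ => hs i),
      Measure.addHaar_closedBall _ _ zero_le_one]
    simp [mul_assoc, hB_def]
  have hmeascalc : (P.card : ℝ≥0∞) * (ENNReal.ofReal (d^n) * B) ≤ volume T := by
    have : ∑ p ∈ P, volume (ball p d) = volume (⋃ p ∈ P, ball p d) :=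
      (measure_biUnion_finset hdisj fun p _ => measurableSet_ball).symm
    have hsub : (⋃ p ∈ P, ball p d) ⊆ T := Set.iUnion₂_subset hball
    calc (P.card : ℝ≥0∞) * (ENNReal.ofReal (d^n) * B)
        = ∑ p ∈ P, volume (ball p d) := by
          rw [Finset.sum_congr rfl (fun p _ => by
            rw [Measure.addHaar_ball_of_pos _ _ hd, finrank_euclideanSpace_fin])]
          rw [Finset.sum_const, nsmul_eq_mul]
      _ = volume (⋃ p ∈ P, ball p d) := this
      _ ≤ volume T := measure_mono hsub
  rw [hvolT] at hmeascalc
  have hcard : (P.card : ℝ) * d^n ≤ ∏ i, s i := by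
    rw [← mul_assoc] at hmeascalc
    have h1 : (P.card : ℝ≥0∞) * ENNReal.ofReal (d^n) ≤ ENNReal.ofReal (∏ i, s i) :=
      (ENNReal.mul_le_mul_iff_left hB0 hBtop).mp hmeascalc
    rw [show ((P.card : ℝ≥0∞)) = ENNReal.ofReal (P.card : ℝ) by
        rw [ENNReal.ofReal_natCast],
      ← ENNReal.ofReal_mul (by positivity)] at h1
    exact (ENNReal.ofReal_le_ofReal_iff (Finset.prod_nonneg fun i _ => (hs i).le)).mp h1
  have hdn : (0:ℝ) < d^n := by positivity
  calc (P.card : ℝ) ≤ (∏ i, s i) / d^n := (le_div_iff₀ hdn).mpr hcard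
    _ = ∏ i, (s i / d) := by
        rw [Finset.prod_div_distrib, Finset.prod_const]
        simp [Finset.card_univ]
    _ ≤ ∏ i, (2 * (2 * r i / δ + 1)) := by
        apply Finset.prod_le_prod (fun i _ => by have := (hr i).le; positivity)
        intro i _
        have heq : s i / d = Real.sqrt 2 * (2 * r i / δ + 1) := by
          rw [hs_def, hd_def]
          field_simp
        rw [heq]
        have : (0:ℝ) ≤ 2 * r i / δ + 1 := by have := (hr i).le; positivity
        nlinarith [sqrt2_le_two]
private lemma exists_cover (n : ℕ) {δ : ℝ} (hδ : 0 < δ) (r : Fin n → ℝ) (hr : ∀ i, 0 < r i) :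
    ∃ P : Finset (EuclideanSpace ℝ (Fin n)),
      (P.card : ℝ) ≤ ∏ i, (2 * (2 * r i / δ + 1)) ∧
      ∀ y : EuclideanSpace ℝ (Fin n), (∑ i, (y i)^2/(r i)^2) ≤ 1 → ∃ p ∈ P, dist y p ≤ δ := by
  classical
  set pred : ℕ → Prop := fun m => ∃ P : Finset (EuclideanSpace ℝ (Fin n)), P.card = m ∧
    (∀ p ∈ P, ∑ i, (p i)^2/(r i)^2 ≤ 1) ∧
    (P : Set (EuclideanSpace ℝ (Fin n))).Pairwise (fun p q => δ < dist p q) with hpred_def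
  set M : ℕ := ⌊∏ i, (2 * (2 * r i / δ + 1))⌋₊ with hM_def
  have hbound : ∀ P : Finset (EuclideanSpace ℝ (Fin n)),
      (∀ p ∈ P, ∑ i, (p i)^2/(r i)^2 ≤ 1) →
      (P : Set (EuclideanSpace ℝ (Fin n))).Pairwise (fun p q => δ < dist p q) →
      P.card ≤ M :=
    fun P hPE hsep => Nat.le_floor (sep_card_bound n hδ r hr P hPE hsep)
  have h0 : pred 0 := ⟨∅, rfl, by simp, by simp⟩
  set m := Nat.findGreatest pred M with hm_def
  have hm : pred m := Nat.findGreatest_spec (Nat.zero_le M) h0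
  obtain ⟨P, hPcard, hPE, hsep⟩ := hm
  refine ⟨P, sep_card_bound n hδ r hr P hPE hsep, ?_⟩
  intro y hy
  by_contra hcon
  push_neg at hcon
  have hyP : y ∉ P := fun hyP => absurd (hcon y hyP) (by simp [hδ.not_gt])
  have hpred : pred (m+1) := by
    refine ⟨insert y P, by rw [Finset.card_insert_of_notMem hyP, hPcard], ?_, ?_⟩
    · intro p hp
      rcases Finset.mem_insert.mp hp with h | h
      · exact h ▸ hy
      · exact hPE p h
    · rw [Finset.coe_insert]
      haveI : Std.Symm (fun p q : EuclideanSpace ℝ (Fin n) => δ < dist p q) := ⟨by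
        intro a b hab
        rwa [dist_comm]⟩
      refine Set.pairwise_insert_of_symm.mpr ⟨hsep, fun b hb _ => hcon b hb⟩
  have hle : m + 1 ≤ M := by
    obtain ⟨Q, hQcard, hQE, hQsep⟩ := hpred
    exact hQcard ▸ hbound Q hQE hQsep
  exact absurd (Nat.le_findGreatest hle hpred) (by omega)

private lemma minkowski_tsum {a b : ℕ → ℝ} (ha : Summable fun k => (a k)^2)
    (hb : Summable fun k => (b k)^2) :
    Summable (fun k => (a k + b k)^2) ∧
    (∑' k, (a k + b k)^2) ≤
      (Real.sqrt (∑' k, (a k)^2) + Real.sqrt (∑' k, (b k)^2))^2 := by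
  have hsum : Summable (fun k => (a k + b k)^2) := by
    apply Summable.of_nonneg_of_le (fun k => sq_nonneg _) (fun k => ?_) ((ha.add hb).mul_left 2)
    nlinarith [sq_nonneg (a k - b k)]
  refine ⟨hsum, ?_⟩
  set A := Real.sqrt (∑' k, (a k)^2) with hA_def
  set B := Real.sqrt (∑' k, (b k)^2) with hB_def
  have hA0 : 0 ≤ A := Real.sqrt_nonneg _
  have hB0 : 0 ≤ B := Real.sqrt_nonneg _
  have hAk : ∀ F : Finset ℕ, ∑ k ∈ F, (a k)^2 ≤ A^2 := fun F => by
    rw [hA_def, Real.sq_sqrt (tsum_nonneg fun k => sq_nonneg _)]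
    exact Summable.sum_le_tsum F (fun k _ => sq_nonneg _) ha
  have hBk : ∀ F : Finset ℕ, ∑ k ∈ F, (b k)^2 ≤ B^2 := fun F => by
    rw [hB_def, Real.sq_sqrt (tsum_nonneg fun k => sq_nonneg _)]
    exact Summable.sum_le_tsum F (fun k _ => sq_nonneg _) hb
  apply Summable.tsum_le_of_sum_le hsum
  intro F
  have cs : (∑ k ∈ F, a k * b k) ≤ A * B := by
    have h2 := Finset.sum_mul_sq_le_sq_mul_sq F a b
    have h3 : (∑ k ∈ F, a k * b k) ≤
        Real.sqrt ((∑ k ∈ F, (a k)^2) * (∑ k ∈ F, (b k)^2)) := by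
      calc (∑ k ∈ F, a k * b k) ≤ |∑ k ∈ F, a k * b k| := le_abs_self _
        _ = Real.sqrt ((∑ k ∈ F, a k * b k)^2) := (Real.sqrt_sq_eq_abs _).symm
        _ ≤ Real.sqrt ((∑ k ∈ F, (a k)^2) * (∑ k ∈ F, (b k)^2)) := Real.sqrt_le_sqrt h2
    refine h3.trans ?_
    rw [Real.sqrt_mul (Finset.sum_nonneg fun k _ => sq_nonneg _)]
    have h4 : Real.sqrt (∑ k ∈ F, (a k)^2) ≤ A := by
      rw [show A = Real.sqrt (A^2) from (Real.sqrt_sq hA0).symm]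
      exact Real.sqrt_le_sqrt (hAk F)
    have h5 : Real.sqrt (∑ k ∈ F, (b k)^2) ≤ B := by
      rw [show B = Real.sqrt (B^2) from (Real.sqrt_sq hB0).symm]
      exact Real.sqrt_le_sqrt (hBk F)
    exact mul_le_mul h4 h5 (Real.sqrt_nonneg _) hA0
  calc ∑ k ∈ F, (a k + b k)^2
      = ∑ k ∈ F, (a k)^2 + 2*(∑ k ∈ F, a k * b k) + ∑ k ∈ F, (b k)^2 := by
        rw [Finset.mul_sum, ← Finset.sum_add_distrib, ← Finset.sum_add_distrib]
        exact Finset.sum_congr rfl fun k _ => by ring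
    _ ≤ A^2 + 2*(A*B) + B^2 := by
        have := hAk F; have := hBk F
        have h2 : 2*(∑ k ∈ F, a k * b k) ≤ 2*(A*B) := by linarith
        linarith
    _ = (A+B)^2 := by ring

private lemma sum_inv_sqrt_le (K : ℕ) :
    ∑ i ∈ Finset.range K, 1/Real.sqrt (i+1) ≤ 2*Real.sqrt K := by
  induction K with
  | zero => simp
  | succ n ih =>
    rw [Finset.sum_range_succ]
    have hx : (0:ℝ) < Real.sqrt (n+1) := Real.sqrt_pos.mpr (by positivity)
    have hx2 : Real.sqrt (n+1)^2 = (n:ℝ)+1 := Real.sq_sqrt (by positivity)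
    have hy2 : Real.sqrt n^2 = (n:ℝ) := Real.sq_sqrt (Nat.cast_nonneg n)
    have hy0 : (0:ℝ) ≤ Real.sqrt n := Real.sqrt_nonneg _
    have hxy : Real.sqrt (n+1) * Real.sqrt n ≤ (n:ℝ) + 1/2 := by
      nlinarith [sq_nonneg (Real.sqrt (n+1) - Real.sqrt n)]
    have key : 1/Real.sqrt (n+1) ≤ 2*(Real.sqrt (n+1) - Real.sqrt n) := by
      rw [div_le_iff₀ hx]
      nlinarith
    have : ((n:ℝ)+1) = ((n+1 : ℕ) : ℝ) := by push_cast; ring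
    calc ∑ i ∈ Finset.range n, 1/Real.sqrt (i+1) + 1/Real.sqrt (n+1)
        ≤ 2*Real.sqrt n + 2*(Real.sqrt (n+1) - Real.sqrt n) := by linarith
      _ = 2*Real.sqrt (n+1) := by ring
      _ = 2*Real.sqrt ((n+1 : ℕ)) := by rw [← this]
private lemma one_add_le_exp_rpow {u θ : ℝ} (hu : 0 ≤ u) (hθ0 : 0 < θ) (hθ1 : θ ≤ 1) :
    1 + u ≤ Real.exp (u^θ/θ) := by
  have h1 : (1+u)^θ ≤ 1 + u^θ := by
    have hnn := NNReal.rpow_add_le_add_rpow (1 : ℝ≥0) u.toNNReal hθ0.le hθ1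
    have h2 := (NNReal.coe_le_coe).mpr hnn
    push_cast at h2
    rw [Real.coe_toNNReal u hu] at h2
    simpa using h2
  have hpos : (0:ℝ) < 1 + u := by linarith
  have hlog : Real.log ((1+u)^θ) = θ * Real.log (1+u) := Real.log_rpow hpos θ
  have h3 : Real.log ((1+u)^θ) ≤ Real.log (1 + u^θ) :=
    Real.log_le_log (by positivity) h1
  have h4 : Real.log (1 + u^θ) ≤ u^θ := by
    have := Real.log_le_sub_one_of_pos (show (0:ℝ) < 1 + u^θ by positivity)
    linarith
  have h5 : Real.log (1+u) ≤ u^θ/θ := by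
    rw [le_div_iff₀ hθ0]
    calc Real.log (1+u) * θ = θ * Real.log (1+u) := by ring
      _ = Real.log ((1+u)^θ) := hlog.symm
      _ ≤ u^θ := h3.trans h4
  calc 1 + u = Real.exp (Real.log (1+u)) := (Real.exp_log hpos).symm
    _ ≤ Real.exp (u^θ/θ) := Real.exp_le_exp.mpr h5

private lemma sqrt2_le_32 : Real.sqrt 2 ≤ 1.5 := by
  nlinarith [Real.sq_sqrt (by norm_num : (0:ℝ) ≤ 2), Real.sqrt_nonneg 2]

private lemma one_le_sqrt2 : (1:ℝ) ≤ Real.sqrt 2 := by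
  nlinarith [Real.sq_sqrt (by norm_num : (0:ℝ) ≤ 2), Real.sqrt_nonneg 2]

set_option maxHeartbeats 2000000 in
theorem stmt_7 (α : ℝ) (hα : 0 < α) :
    ∃ C > 0, ∀ R > 0, ∀ ε > 0,
      ∃ S : Finset (ℕ → ℝ),
        (∀ s ∈ S, Summable fun k => (s k)^2) ∧
        (S.card : ℝ) ≤ Real.exp (C * (R/ε)^(2/(1+2*α))) ∧
        ∀ x : ℕ → ℝ,
          (∃ h g : ℕ → ℝ, (∀ k, x k = h k + g k) ∧
            (Summable fun k => (h k)^2 * ((k:ℝ)+1)^(1+2*α)) ∧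
            (∑' k : ℕ, (h k)^2 * ((k:ℝ)+1)^(1+2*α)) ≤ R^2 ∧
            (Summable fun k => (g k)^2) ∧ (∑' k : ℕ, (g k)^2) ≤ ε^2) →
          ∃ s ∈ S, (Summable fun k => (x k - s k)^2) ∧
            (∑' k : ℕ, (x k - s k)^2) ≤ (2*ε)^2 := by
  classical
  have h2α : (0:ℝ) < 1 + 2*α := by linarith
  set γ : ℝ := 2/(1+2*α) with hγ_def
  have hγpos : 0 < γ := by positivity
  have hγ2 : γ ≤ 2 := by
    rw [hγ_def, div_le_iff₀ h2α]; nlinarith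
  set b : ℝ := α + 1/2 with hb_def
  have hb : 0 < b := by rw [hb_def]; linarith
  have hbγ : γ * b = 1 := by rw [hγ_def, hb_def]; field_simp; ring
  refine ⟨30*(1+α), by nlinarith, ?_⟩
  intro R hR ε hε
  have hRε : 0 < R/ε := by positivity
  have hone : ∀ k:ℕ, (1:ℝ) ≤ ((k:ℝ)+1)^(1+2*α) := fun k =>
    Real.one_le_rpow (by linarith [Nat.cast_nonneg (α := ℝ) k]) (by linarith)
  by_cases hcase : R ≤ ε
  · -- trivial case: singleton {0}
    refine ⟨{fun _ => 0}, ?_, ?_, ?_⟩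
    · intro s hs
      rw [Finset.mem_singleton] at hs
      subst hs
      simpa using summable_zero
    · rw [Finset.card_singleton]
      have hnn : (0:ℝ) ≤ 30*(1+α) * (R/ε)^γ := by positivity
      simpa using Real.one_le_exp hnn
    · intro x hxex
      obtain ⟨h, g, hx, hh, hhsum, hg, hgsum⟩ := hxex
      have hh2 : Summable fun k => (h k)^2 := by
        apply Summable.of_nonneg_of_le (fun k => sq_nonneg _) (fun k => ?_) hh
        nlinarith [sq_nonneg (h k), hone k]
      obtain ⟨hsummable, hbound⟩ := minkowski_tsum hh2 hg
      have hfun : (fun k => (x k - (fun _ => (0:ℝ)) k)^2) = fun k => (h k + g k)^2 :=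
        funext fun k => by simp [hx k]
      refine ⟨fun _ => 0, Finset.mem_singleton_self _, ?_, ?_⟩
      · rw [hfun]; exact hsummable
      · rw [hfun]
        refine hbound.trans ?_
        have h1 : ∑' k, (h k)^2 ≤ ε^2 := by
          refine le_trans (Summable.tsum_le_tsum (fun k => ?_) hh2 hh) (hhsum.trans (by nlinarith))
          nlinarith [sq_nonneg (h k), hone k]
        have hs1 : Real.sqrt (∑' k, (h k)^2) ≤ ε :=
          (Real.sqrt_le_sqrt h1).trans (by rw [Real.sqrt_sq hε.le])
        have hs2 : Real.sqrt (∑' k, (g k)^2) ≤ ε :=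
          (Real.sqrt_le_sqrt hgsum).trans (by rw [Real.sqrt_sq hε.le])
        nlinarith [Real.sqrt_nonneg (∑' k, (h k)^2), Real.sqrt_nonneg (∑' k, (g k)^2)]
  · -- main case
    push_neg at hcase
    have hRε1 : (1:ℝ) ≤ R/ε := le_of_lt ((one_lt_div hε).mpr hcase)
    set u : ℝ := (R/ε)^γ with hu_def
    have hu1 : 1 ≤ u := Real.one_le_rpow hRε1 hγpos.le
    have hu0 : 0 < u := lt_of_lt_of_le one_pos hu1
    have hsqrt2 : (0:ℝ) < Real.sqrt 2 := lt_of_lt_of_le one_pos one_le_sqrt2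
    set δ : ℝ := ε/Real.sqrt 2 with hδ_def
    have hδpos : 0 < δ := by positivity
    set K : ℕ := ⌈(Real.sqrt 2 * R/ε)^γ⌉₊ with hK_def
    have hKbase : (0:ℝ) < Real.sqrt 2 * R/ε := by positivity
    have hKge : (Real.sqrt 2 * R/ε)^γ ≤ (K:ℝ) := Nat.le_ceil _
    have hKle : (K:ℝ) ≤ 3*u := by
      have h1 : (Real.sqrt 2 * R/ε)^γ = (Real.sqrt 2)^γ * (R/ε)^γ := by
        rw [mul_div_assoc, Real.mul_rpow hsqrt2.le hRε.le]
      have h2 : (Real.sqrt 2)^γ ≤ 2 := by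
        calc (Real.sqrt 2)^γ ≤ (Real.sqrt 2)^(2:ℝ) :=
              Real.rpow_le_rpow_of_exponent_le one_le_sqrt2 hγ2
          _ = 2 := by
              rw [Real.rpow_two, Real.sq_sqrt (by norm_num : (0:ℝ) ≤ 2)]
      have h3 : (K:ℝ) < (Real.sqrt 2 * R/ε)^γ + 1 := Nat.ceil_lt_add_one (by positivity)
      have h4 : (0:ℝ) ≤ (R/ε)^γ := Real.rpow_nonneg hRε.le γ
      nlinarith
    set r : Fin K → ℝ := fun i => R/((i:ℝ)+1)^b with hr_def
    have hipow : ∀ i : Fin K, (0:ℝ) < ((i:ℝ)+1)^b := fun i =>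
      Real.rpow_pos_of_pos (by positivity) b
    have hrpos : ∀ i : Fin K, 0 < r i := fun i => by
      have := hipow i; rw [hr_def]; positivity
    obtain ⟨P, hPcard, hPcover⟩ := exists_cover K hδpos r hrpos
    set emb : EuclideanSpace ℝ (Fin K) → (ℕ → ℝ) :=
      fun p k => if hk : k < K then p ⟨k, hk⟩ else 0 with hemb_def
    refine ⟨P.image emb, ?_, ?_, ?_⟩
    · -- summability of elements
      intro s hs
      obtain ⟨p, hp, rfl⟩ := Finset.mem_image.mp hs
      apply summable_of_ne_finset_zero (s := Finset.range K)
      intro k hk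
      rw [Finset.mem_range] at hk
      simp [hemb_def, hk]
    · -- cardinality bound
      set t : ℝ := 2*Real.sqrt 2*R/ε with ht_def
      have ht0 : 0 < t := by positivity
      set θ : ℝ := γ/2 with hθ_def
      have hθpos : 0 < θ := by positivity
      have hθ1 : θ ≤ 1 := by rw [hθ_def]; linarith
      have hθb : b * θ = 1/2 := by
        have : b * θ = γ*b/2 := by rw [hθ_def]; ring
        rw [this, hbγ]
      have h2b : θ * (2*b) = 1 := by
        have : θ * (2*b) = γ*b := by rw [hθ_def]; ring
        rw [this, hbγ]
      have hfactor : ∀ i : Fin K,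
          2*(2*r i/δ + 1) ≤ 2*Real.exp (2*b*(t^θ*(1/Real.sqrt ((i:ℝ)+1)))) := by
        intro i
        have hpow := hipow i
        have hval : 2*r i/δ = t/((i:ℝ)+1)^b := by
          rw [hr_def, hδ_def, ht_def]
          field_simp
        rw [hval]
        have hu' : (0:ℝ) ≤ t/((i:ℝ)+1)^b := by positivity
        have h1 : 1 + t/((i:ℝ)+1)^b ≤ Real.exp ((t/((i:ℝ)+1)^b)^θ/θ) :=
          one_add_le_exp_rpow hu' hθpos hθ1
        have h2 : (t/((i:ℝ)+1)^b)^θ = t^θ*(1/Real.sqrt ((i:ℝ)+1)) := by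
          rw [Real.div_rpow ht0.le hpow.le]
          have h21 : (((i:ℝ)+1)^b)^θ = ((i:ℝ)+1)^(b*θ) := by
            rw [← Real.rpow_mul (by positivity : (0:ℝ) ≤ (i:ℝ)+1)]
          rw [h21, hθb, ← Real.sqrt_eq_rpow]
          rw [div_eq_mul_one_div]
        have h3 : (t/((i:ℝ)+1)^b)^θ/θ = 2*b*(t^θ*(1/Real.sqrt ((i:ℝ)+1))) := by
          rw [h2, div_eq_iff hθpos.ne']
          calc t^θ*(1/Real.sqrt ((i:ℝ)+1))
              = (θ*(2*b))*(t^θ*(1/Real.sqrt ((i:ℝ)+1))) := by rw [h2b, one_mul]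
            _ = 2*b*(t^θ*(1/Real.sqrt ((i:ℝ)+1)))*θ := by ring
        rw [← h3]
        have := h1
        linarith
      have hcard1 : ((P.image emb).card : ℝ) ≤ (P.card : ℝ) := by
        exact_mod_cast Finset.card_image_le
      refine (hcard1.trans hPcard).trans ?_
      calc ∏ i : Fin K, (2*(2*r i/δ + 1))
          ≤ ∏ i : Fin K, (2*Real.exp (2*b*(t^θ*(1/Real.sqrt ((i:ℝ)+1))))) :=
            Finset.prod_le_prod (fun i _ => by have := (hrpos i).le; positivity)
              (fun i _ => hfactor i)
        _ = 2^K * Real.exp (∑ i : Fin K, 2*b*(t^θ*(1/Real.sqrt ((i:ℝ)+1)))) := by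
            rw [Finset.prod_mul_distrib, Finset.prod_const, ← Real.exp_sum,
              Finset.card_univ, Fintype.card_fin]
        _ ≤ Real.exp (30*(1+α)*u) := ?_
      have hsum : ∑ i : Fin K, 2*b*(t^θ*(1/Real.sqrt ((i:ℝ)+1)))
          ≤ 2*b*t^θ*(2*Real.sqrt K) := by
        have he : ∑ i : Fin K, 2*b*(t^θ*(1/Real.sqrt ((i:ℝ)+1)))
            = 2*b*t^θ*(∑ i ∈ Finset.range K, 1/Real.sqrt ((i:ℝ)+1)) := by
          rw [← Fin.sum_univ_eq_sum_range (fun k => 1/Real.sqrt ((k:ℝ)+1)) K,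
            Finset.mul_sum]
          exact Finset.sum_congr rfl fun i _ => by ring
        rw [he]
        have hnn : (0:ℝ) ≤ 2*b*t^θ := by positivity
        exact mul_le_mul_of_nonneg_left (sum_inv_sqrt_le K) hnn
      have h2K : (2:ℝ)^K = Real.exp ((K:ℝ) * Real.log 2) := by
        rw [Real.exp_nat_mul, Real.exp_log (by norm_num : (0:ℝ) < 2)]
      rw [h2K, ← Real.exp_add]
      apply Real.exp_le_exp.mpr
      have hlog2 : Real.log 2 ≤ 1 := by
        have := Real.log_le_sub_one_of_pos (by norm_num : (0:ℝ) < 2)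
        linarith
      have htθ : t^θ ≤ 3*Real.sqrt u := by
        have he : t = (2*Real.sqrt 2)*(R/ε) := by rw [ht_def]; ring
        rw [he, Real.mul_rpow (by positivity) hRε.le]
        have hA : (2*Real.sqrt 2)^θ ≤ 3 := by
          calc (2*Real.sqrt 2)^θ ≤ (2*Real.sqrt 2)^(1:ℝ) :=
                Real.rpow_le_rpow_of_exponent_le (by linarith [one_le_sqrt2]) hθ1
            _ = 2*Real.sqrt 2 := Real.rpow_one _
            _ ≤ 3 := by linarith [sqrt2_le_32]
        have hB : (R/ε)^θ = Real.sqrt u := by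
          rw [hθ_def, hu_def, show γ/2 = γ*(1/2) by ring,
            Real.rpow_mul hRε.le, ← Real.sqrt_eq_rpow]
        calc (2*Real.sqrt 2)^θ*(R/ε)^θ ≤ 3*(R/ε)^θ :=
              mul_le_mul_of_nonneg_right hA (Real.rpow_nonneg hRε.le θ)
          _ = 3*Real.sqrt u := by rw [hB]
      have hsqrtK : Real.sqrt K ≤ 2*Real.sqrt u := by
        calc Real.sqrt K ≤ Real.sqrt (4*u) := Real.sqrt_le_sqrt (by linarith)
          _ = 2*Real.sqrt u := by
              rw [show (4:ℝ)*u = 2^2*u by ring, Real.sqrt_mul (by norm_num) u,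
                Real.sqrt_sq (by norm_num : (0:ℝ) ≤ 2)]
      have hsqu : Real.sqrt u * Real.sqrt u = u := Real.mul_self_sqrt hu0.le
      have hKlog : (K:ℝ) * Real.log 2 ≤ 3*u := by
        have hKpos : (0:ℝ) ≤ (K:ℝ) := Nat.cast_nonneg K
        calc (K:ℝ)*Real.log 2 ≤ (K:ℝ)*1 := mul_le_mul_of_nonneg_left hlog2 hKpos
          _ ≤ 3*u := by linarith
      have hfin : 2*b*t^θ*(2*Real.sqrt K) ≤ 24*b*u := by
        have h1 : (0:ℝ) ≤ Real.sqrt K := Real.sqrt_nonneg _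
        have h2 : (0:ℝ) ≤ Real.sqrt u := Real.sqrt_nonneg _
        have h3 : (0:ℝ) ≤ t^θ := Real.rpow_nonneg ht0.le θ
        have hm : t^θ*Real.sqrt K ≤ 3*Real.sqrt u*(2*Real.sqrt u) :=
          mul_le_mul htθ hsqrtK h1 (by linarith)
        have h6 : 3*Real.sqrt u*(2*Real.sqrt u) = 6*u := by
          rw [show 3*Real.sqrt u*(2*Real.sqrt u)
            = 6*(Real.sqrt u*Real.sqrt u) by ring, hsqu]
        have hm2 : t^θ*Real.sqrt K ≤ 6*u := by linarith
        have hb4 : (0:ℝ) ≤ 4*b := by linarith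
        calc 2*b*t^θ*(2*Real.sqrt K) = 4*b*(t^θ*Real.sqrt K) := by ring
          _ ≤ 4*b*(6*u) := mul_le_mul_of_nonneg_left hm2 hb4
          _ = 24*b*u := by ring
      have hfinal : (K:ℝ)*Real.log 2 + 2*b*t^θ*(2*Real.sqrt K) ≤ 30*(1+α)*u := by
        have h24 : 24*b*u = (24*α+12)*u := by rw [hb_def]; ring
        have hxtra : (0:ℝ) ≤ (15+6*α)*u := mul_nonneg (by linarith) hu0.le
        have hexp : 30*(1+α)*u = 3*u + (24*α+12)*u + (15+6*α)*u := by ring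
        linarith [hKlog, hfin]
      exact (add_le_add_right hsum ((K:ℝ)*Real.log 2)).trans hfinal
    · -- covering
      intro x hxex
      obtain ⟨h, g, hx, hh, hhsum, hg, hgsum⟩ := hxex
      have hh2 : Summable fun k => (h k)^2 := by
        apply Summable.of_nonneg_of_le (fun k => sq_nonneg _) (fun k => ?_) hh
        nlinarith [sq_nonneg (h k), hone k]
      set y : EuclideanSpace ℝ (Fin K) :=
        (WithLp.equiv 2 (Fin K → ℝ)).symm (fun i => h i) with hy_def
      have hyc : ∀ i : Fin K, y i = h i := fun i => rfl
      have hy : ∑ i, (y i)^2/(r i)^2 ≤ 1 := by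
        have hterm : ∀ i : Fin K,
            (y i)^2/(r i)^2 = (h i)^2*((i:ℝ)+1)^(1+2*α)/R^2 := by
          intro i
          have hpow := hipow i
          have hpow2 : (((i:ℝ)+1)^b)^2 = ((i:ℝ)+1)^(1+2*α) := by
            rw [← Real.rpow_natCast (((i:ℝ)+1)^b) 2,
              ← Real.rpow_mul (by positivity : (0:ℝ) ≤ (i:ℝ)+1)]
            norm_num
            congr 1
            rw [hb_def]; ring
          rw [hyc i, hr_def]
          rw [div_pow, div_div_eq_mul_div, hpow2]
        calc ∑ i, (y i)^2/(r i)^2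
            = ∑ i : Fin K, (h i)^2*((i:ℝ)+1)^(1+2*α)/R^2 :=
              Finset.sum_congr rfl fun i _ => hterm i
          _ = (∑ i ∈ Finset.range K, (h i)^2*((i:ℝ)+1)^(1+2*α))/R^2 := by
              rw [← Finset.sum_div, Fin.sum_univ_eq_sum_range
                (fun k => (h k)^2*((k:ℝ)+1)^(1+2*α)) K]
          _ ≤ R^2/R^2 := by
              gcongr
              exact le_trans (Summable.sum_le_tsum _ (fun k _ => by positivity) hh) hhsum
          _ = 1 := div_self (by positivity)
      obtain ⟨p, hpP, hdist⟩ := hPcover y hy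
      refine ⟨emb p, Finset.mem_image_of_mem emb hpP, ?_⟩
      have hsK : ∀ k, K ≤ k → emb p k = 0 := fun k hk => by
        simp [hemb_def, Nat.not_lt.mpr hk]
      have hembsum : Summable fun k => (emb p k)^2 := by
        apply summable_of_ne_finset_zero (s := Finset.range K)
        intro k hk
        rw [Finset.mem_range] at hk
        simp [hemb_def, hk]
      have hhs : Summable fun k => (h k - emb p k)^2 := by
        apply Summable.of_nonneg_of_le (fun k => sq_nonneg _) (fun k => ?_)
          ((hh2.add hembsum).mul_left 2)
        nlinarith [sq_nonneg (h k + emb p k)]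
      have hhead : ∑ k ∈ Finset.range K, (h k - emb p k)^2 ≤ ε^2/2 := by
        have he1 : ∑ k ∈ Finset.range K, (h k - emb p k)^2
            = ∑ i : Fin K, (y i - p i)^2 := by
          rw [← Fin.sum_univ_eq_sum_range (fun k => (h k - emb p k)^2) K]
          apply Finset.sum_congr rfl
          intro i _
          rw [hyc i]
          congr 2
          simp [hemb_def, i.isLt]
        have hd2 : (dist y p)^2 = ∑ i : Fin K, (y i - p i)^2 := by
          rw [EuclideanSpace.dist_eq,
            Real.sq_sqrt (Finset.sum_nonneg fun i _ => sq_nonneg _)]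
          exact Finset.sum_congr rfl fun i _ => by rw [Real.dist_eq, sq_abs]
        have hδ2 : δ^2 = ε^2/2 := by
          rw [hδ_def, div_pow, Real.sq_sqrt (by norm_num : (0:ℝ) ≤ 2)]
        rw [he1, ← hd2]
        nlinarith [dist_nonneg (x := y) (y := p), hdist]
      have hKpow : 2*R^2/ε^2 ≤ (K:ℝ)^(1+2*α) := by
        have h2' : ((Real.sqrt 2*R/ε)^γ)^(1+2*α) ≤ (K:ℝ)^(1+2*α) :=
          Real.rpow_le_rpow (Real.rpow_nonneg hKbase.le γ) hKge (by linarith)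
        have h3' : ((Real.sqrt 2*R/ε)^γ)^(1+2*α) = (Real.sqrt 2*R/ε)^(2:ℝ) := by
          rw [← Real.rpow_mul hKbase.le]
          congr 1
          rw [hγ_def]
          field_simp
        have h4' : (Real.sqrt 2*R/ε)^(2:ℝ) = 2*R^2/ε^2 := by
          rw [Real.rpow_two, div_pow, mul_pow, Real.sq_sqrt (by norm_num : (0:ℝ) ≤ 2)]
        rw [h3', h4'] at h2'
        exact h2'
      have hptw : ∀ k:ℕ, (h (k+K))^2
          ≤ (ε^2/(2*R^2)) * ((h (k+K))^2 * (((k+K:ℕ):ℝ)+1)^(1+2*α)) := by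
        intro k
        have hKk : (K:ℝ) ≤ ((k+K:ℕ):ℝ)+1 := by
          push_cast
          linarith [Nat.cast_nonneg (α := ℝ) k]
        have hmono : (K:ℝ)^(1+2*α) ≤ (((k+K:ℕ):ℝ)+1)^(1+2*α) :=
          Real.rpow_le_rpow (Nat.cast_nonneg K) hKk (by linarith)
        have hX : 2*R^2/ε^2 ≤ (((k+K:ℕ):ℝ)+1)^(1+2*α) := hKpow.trans hmono
        have hkey : 1 ≤ (ε^2/(2*R^2)) * (((k+K:ℕ):ℝ)+1)^(1+2*α) := by
          calc (1:ℝ) = (ε^2/(2*R^2))*(2*R^2/ε^2) := by field_simp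
            _ ≤ _ := mul_le_mul_of_nonneg_left hX (by positivity)
        calc (h (k+K))^2 = (h (k+K))^2 * 1 := by ring
          _ ≤ (h (k+K))^2 * ((ε^2/(2*R^2)) * (((k+K:ℕ):ℝ)+1)^(1+2*α)) :=
              mul_le_mul_of_nonneg_left hkey (sq_nonneg _)
          _ = (ε^2/(2*R^2)) * ((h (k+K))^2 * (((k+K:ℕ):ℝ)+1)^(1+2*α)) := by ring
      have hshift2 : Summable fun k => (h (k+K))^2 := (summable_nat_add_iff K).mpr hh2
      have hshift : Summable (fun k => (h (k+K))^2 * (((k+K:ℕ):ℝ)+1)^(1+2*α)) :=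
        (summable_nat_add_iff K).mpr hh
      have h5 : (∑' k, (h (k+K))^2 * (((k+K:ℕ):ℝ)+1)^(1+2*α)) ≤ R^2 := by
        have hsplit := Summable.sum_add_tsum_nat_add
          (f := fun k => (h k)^2*((k:ℝ)+1)^(1+2*α)) K hh
        have hnn : 0 ≤ ∑ k ∈ Finset.range K, (h k)^2*((k:ℝ)+1)^(1+2*α) :=
          Finset.sum_nonneg fun k _ => by positivity
        linarith [hhsum]
      have htail : (∑' k, (h (k+K))^2) ≤ ε^2/2 := by
        calc (∑' k, (h (k+K))^2)
            ≤ ∑' k, (ε^2/(2*R^2)) * ((h (k+K))^2 * (((k+K:ℕ):ℝ)+1)^(1+2*α)) :=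
              Summable.tsum_le_tsum hptw hshift2 (hshift.mul_left _)
          _ = (ε^2/(2*R^2)) * ∑' k, ((h (k+K))^2 * (((k+K:ℕ):ℝ)+1)^(1+2*α)) :=
              tsum_mul_left
          _ ≤ (ε^2/(2*R^2)) * R^2 := mul_le_mul_of_nonneg_left h5 (by positivity)
          _ = ε^2/2 := by field_simp
      have hhs_tsum : (∑' k, (h k - emb p k)^2) ≤ ε^2 := by
        have hsplit := Summable.sum_add_tsum_nat_add (f := fun k => (h k - emb p k)^2) K hhs
        have htail_eq : (∑' k, (h (k+K) - emb p (k+K))^2) = ∑' k, (h (k+K))^2 :=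
          tsum_congr fun k => by rw [hsK (k+K) (Nat.le_add_left K k)]; ring
        rw [htail_eq] at hsplit
        linarith [hhead, htail]
      obtain ⟨hxs_sum, hxs_bound⟩ :=
        minkowski_tsum (a := fun k => h k - emb p k) (b := g) hhs hg
      have hfun : (fun k => (x k - emb p k)^2) = fun k => ((h k - emb p k) + g k)^2 :=
        funext fun k => by rw [hx k]; ring
      refine ⟨?_, ?_⟩
      · rw [hfun]
        exact hxs_sum
      · rw [hfun]
        refine hxs_bound.trans ?_
        have hs1 : Real.sqrt (∑' k, (h k - emb p k)^2) ≤ ε :=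
          (Real.sqrt_le_sqrt hhs_tsum).trans (by rw [Real.sqrt_sq hε.le])
        have hs2 : Real.sqrt (∑' k, (g k)^2) ≤ ε :=
          (Real.sqrt_le_sqrt hgsum).trans (by rw [Real.sqrt_sq hε.le])
        nlinarith [Real.sqrt_nonneg (∑' k, (h k - emb p k)^2),
          Real.sqrt_nonneg (∑' k, (g k)^2)]
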